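/- Let d be a positive integer and α ∈ (0, ∞). Let (M, dist) be a compact metric space with diameter D ∈ (0, ∞) and let ν be a Borel probability measure on M satisfying ν(B(x,r)) ≥ c₀·r^d for all x ∈ M and all 0 < r < D, for some constant c₀ > 0. Let X_1, X_2, … be i.i.d. random variables with law ν. Then there exists a constant C > 0 such that for every integer n ≥ 2: E[ (sup_{x∈M} dist(x, {X_1, …, X_n}))^α ] ≤ C·(log(n)/n)^{α/d}. -/

import Mathlib

open MeasureTheory Metric ProbabilityTheory
open scoped ENNReal NNReal


lemma net_card_bound {M : Type*} [MetricSpace M] [MeasurableSpace M] [BorelSpace M]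
    (ν : Measure M) [IsProbabilityMeasure ν] (c r : ℝ) (hr : 0 < r)
    (hball : ∀ x : M, c ≤ (ν (ball x (r/2))).toReal)
    (S : Finset M) (hsep : ∀ a ∈ S, ∀ b ∈ S, a ≠ b → r ≤ dist a b) :
    (S.card : ℝ) * c ≤ 1 := by
  have hdisj : (↑S : Set M).PairwiseDisjoint (fun s => ball s (r/2)) := by
    intro a ha b hb hab
    exact ball_disjoint_ball (by linarith [hsep a ha b hb hab])
  have hmeas := measure_biUnion_finset (μ := ν) hdisj (fun s _ => measurableSet_ball)
  have hfin : ∀ s ∈ S, ν (ball s (r/2)) ≠ ⊤ := fun s _ => measure_ne_top ν _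
  calc (S.card : ℝ) * c = ∑ _s ∈ S, c := by rw [Finset.sum_const, nsmul_eq_mul]
    _ ≤ ∑ s ∈ S, (ν (ball s (r/2))).toReal := Finset.sum_le_sum (fun s _ => hball s)
    _ = (∑ s ∈ S, ν (ball s (r/2))).toReal := (ENNReal.toReal_sum hfin).symm
    _ = (ν (⋃ s ∈ S, ball s (r/2))).toReal := by rw [hmeas]
    _ ≤ (ν (Set.univ)).toReal := by
        apply ENNReal.toReal_mono (measure_ne_top ν _)
        exact measure_mono (Set.subset_univ _)
    _ = 1 := by simp

lemma net_exists {M : Type*} [MetricSpace M] [MeasurableSpace M] [BorelSpace M]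
    (ν : Measure M) [IsProbabilityMeasure ν] (c r : ℝ) (hc : 0 < c) (hr : 0 < r)
    (hball : ∀ x : M, c ≤ (ν (ball x (r/2))).toReal) :
    ∃ S : Finset M, (S.card : ℝ) * c ≤ 1 ∧ ∀ x : M, ∃ s ∈ S, dist x s < r := by
  classical
  set P : ℕ → Prop := fun k => ∃ S : Finset M,
    (∀ a ∈ S, ∀ b ∈ S, a ≠ b → r ≤ dist a b) ∧ S.card = k with hP
  have hcard : ∀ (S : Finset M), (∀ a ∈ S, ∀ b ∈ S, a ≠ b → r ≤ dist a b) →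
      S.card ≤ ⌊1/c⌋₊ := by
    intro S hS
    apply Nat.le_floor
    have := net_card_bound ν c r hr hball S hS
    rw [le_div_iff₀ hc]
    linarith
  have hP0 : P 0 := ⟨∅, by simp⟩
  obtain ⟨S, hsep, hcardk⟩ : P (Nat.findGreatest P ⌊1/c⌋₊) :=
    Nat.findGreatest_spec (Nat.zero_le _) hP0
  refine ⟨S, net_card_bound ν c r hr hball S hsep, ?_⟩
  intro x
  by_contra hx
  push_neg at hx
  have hxS : x ∉ S := fun h => absurd (hx x h) (by simp [hr])
  have hsep' : ∀ a ∈ insert x S, ∀ b ∈ insert x S, a ≠ b → r ≤ dist a b := by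
    intro a ha b hb hab
    rcases Finset.mem_insert.1 ha with ha' | ha' <;>
      rcases Finset.mem_insert.1 hb with hb' | hb'
    · exact absurd (ha'.trans hb'.symm) hab
    · subst ha'; exact hx b hb'
    · subst hb'; rw [dist_comm]; exact hx a ha'
    · exact hsep a ha' b hb' hab
  have hle : S.card + 1 ≤ ⌊1/c⌋₊ := by
    have := hcard (insert x S) hsep'
    rwa [Finset.card_insert_of_notMem hxS] at this
  have := Nat.findGreatest_is_greatest (by omega : Nat.findGreatest P ⌊1/c⌋₊ < S.card + 1)
    (by omega)
  exact this ⟨insert x S, hsep', Finset.card_insert_of_notMem hxS⟩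


lemma bad_one_ball {Ω : Type*} [MeasurableSpace Ω] (Pr : Measure Ω) [IsProbabilityMeasure Pr]
    {M : Type*} [MetricSpace M] [MeasurableSpace M] [BorelSpace M]
    (ν : Measure M) [IsProbabilityMeasure ν]
    (X : ℕ → Ω → M) (hXmeas : ∀ i, Measurable (X i))
    (hXlaw : ∀ i, Measure.map (X i) Pr = ν)
    (hXindep : iIndepFun X Pr)
    (s : M) (r : ℝ) (n : ℕ) (t : ℝ) (ht0 : 0 ≤ t)
    (hb : t ≤ (ν (ball s r)).toReal) :
    Pr (⋂ i ∈ Finset.range n, X i ⁻¹' (ball s r)ᶜ)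
      ≤ ENNReal.ofReal (Real.exp (-(n * t))) := by
  have hprod : Pr (⋂ i ∈ Finset.range n, X i ⁻¹' (ball s r)ᶜ)
      = ∏ i ∈ Finset.range n, Pr (X i ⁻¹' (ball s r)ᶜ) :=
    hXindep.meas_biInter (fun i _ => ⟨(ball s r)ᶜ, measurableSet_ball.compl, rfl⟩)
  have hpre : ∀ i : ℕ, Pr (X i ⁻¹' (ball s r)ᶜ) = ν (ball s r)ᶜ := by
    intro i
    rw [← hXlaw i, Measure.map_apply (hXmeas i) measurableSet_ball.compl]
  have hone : ν (ball s r)ᶜ ≤ ENNReal.ofReal (Real.exp (-t)) := by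
    have hsub : ν (ball s r)ᶜ = 1 - ν (ball s r) := by
      rw [measure_compl measurableSet_ball (measure_ne_top _ _), measure_univ]
    have h1 : ENNReal.ofReal t ≤ ν (ball s r) := by
      rw [← ENNReal.ofReal_toReal (measure_ne_top ν (ball s r))]
      exact ENNReal.ofReal_le_ofReal hb
    calc ν (ball s r)ᶜ = 1 - ν (ball s r) := hsub
      _ ≤ 1 - ENNReal.ofReal t := tsub_le_tsub_left h1 1
      _ = ENNReal.ofReal (1 - t) := by
          rw [ENNReal.ofReal_sub 1 ht0, ENNReal.ofReal_one]
      _ ≤ ENNReal.ofReal (Real.exp (-t)) := by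
          apply ENNReal.ofReal_le_ofReal
          linarith [Real.add_one_le_exp (-t)]
  calc Pr (⋂ i ∈ Finset.range n, X i ⁻¹' (ball s r)ᶜ)
      = ∏ i ∈ Finset.range n, Pr (X i ⁻¹' (ball s r)ᶜ) := hprod
    _ = (ν (ball s r)ᶜ) ^ n := by
        simp only [hpre]
        rw [Finset.prod_const, Finset.card_range]
    _ ≤ (ENNReal.ofReal (Real.exp (-t))) ^ n := pow_le_pow_left' hone n
    _ = ENNReal.ofReal (Real.exp (-t) ^ n) := by
        rw [ENNReal.ofReal_pow (Real.exp_nonneg _)]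
    _ = ENNReal.ofReal (Real.exp (-(n * t))) := by
        rw [← Real.exp_nat_mul]
        ring_nf

lemma covering_key {Ω : Type*} [MeasurableSpace Ω] (Pr : Measure Ω) [IsProbabilityMeasure Pr]
    {M : Type*} [MetricSpace M] [CompactSpace M] [MeasurableSpace M] [BorelSpace M]
    (d : ℕ) (α : ℝ) (hα : 0 < α)
    (ν : Measure M) [IsProbabilityMeasure ν]
    (c₀ : ℝ) (hc₀ : 0 < c₀)
    (hlower : ∀ (x : M) (r : ℝ), 0 < r → r < diam (Set.univ : Set M) →
      c₀ * r ^ d ≤ (ν (ball x r)).toReal)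
    (X : ℕ → Ω → M) (hXmeas : ∀ i, Measurable (X i))
    (hXlaw : ∀ i, Measure.map (X i) Pr = ν)
    (hXindep : iIndepFun X Pr)
    (n : ℕ) (hn : 1 ≤ n) (r : ℝ) (hr0 : 0 < r) (hrD : r < diam (Set.univ : Set M)) :
    ∫⁻ ω, ENNReal.ofReal ((⨆ x : M, infDist x ((fun i => X i ω) '' Set.Iio n)) ^ α) ∂Pr
      ≤ ENNReal.ofReal ((2*r)^α) + ENNReal.ofReal ((diam (Set.univ : Set M))^α)
          * (ENNReal.ofReal (1 / (c₀ * (r/2)^d))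
            * ENNReal.ofReal (Real.exp (-(n * (c₀ * r^d))))) := by
  have hDpos : (0:ℝ) < diam (Set.univ : Set M) := lt_trans hr0 hrD
  have hM : Nonempty M := by
    by_contra h
    rw [not_nonempty_iff] at h
    rw [Set.univ_eq_empty_iff.2 h, Metric.diam_empty] at hDpos
    exact lt_irrefl 0 hDpos
  set D := diam (Set.univ : Set M) with hD
  obtain ⟨S, hScard, hScov⟩ := net_exists ν (c₀ * (r/2)^d) r (by positivity) hr0
    (fun x => hlower x (r/2) (by linarith) (by linarith))
  set G : Set Ω := ⋂ s ∈ S, ⋃ i ∈ Finset.range n, X i ⁻¹' (ball s r) with hG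
  have hGmeas : MeasurableSet G :=
    MeasurableSet.biInter (S.countable_toSet) (fun s _ =>
      MeasurableSet.biUnion (Finset.range n).countable_toSet
        (fun i _ => (hXmeas i) measurableSet_ball))
  have hPmem : ∀ ω, X 0 ω ∈ (fun i => X i ω) '' Set.Iio n :=
    fun ω => ⟨0, by simpa using Nat.lt_of_lt_of_le Nat.zero_lt_one hn, rfl⟩
  have hR0 : ∀ ω, 0 ≤ ⨆ x : M, infDist x ((fun i => X i ω) '' Set.Iio n) :=
    fun ω => Real.iSup_nonneg (fun x => infDist_nonneg)
  have hRD : ∀ ω, (⨆ x : M, infDist x ((fun i => X i ω) '' Set.Iio n)) ≤ D := by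
    intro ω
    apply ciSup_le
    intro x
    exact le_trans (infDist_le_dist_of_mem (hPmem ω))
      (dist_le_diam_of_mem isCompact_univ.isBounded (Set.mem_univ _) (Set.mem_univ _))
  have hRG : ∀ ω ∈ G, (⨆ x : M, infDist x ((fun i => X i ω) '' Set.Iio n)) ≤ 2*r := by
    intro ω hω
    apply ciSup_le
    intro x
    obtain ⟨s, hs, hxs⟩ := hScov x
    have hω' : ω ∈ ⋃ i ∈ Finset.range n, X i ⁻¹' (ball s r) :=
      Set.mem_iInter₂.1 hω s hs
    obtain ⟨i, hi, hXi⟩ := Set.mem_iUnion₂.1 hω'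
    have hmem : X i ω ∈ (fun j => X j ω) '' Set.Iio n :=
      ⟨i, Finset.mem_range.1 hi, rfl⟩
    have hd2 : dist (X i ω) s < r := mem_ball.1 hXi
    calc infDist x ((fun j => X j ω) '' Set.Iio n) ≤ dist x (X i ω) :=
          infDist_le_dist_of_mem hmem
      _ ≤ dist x s + dist s (X i ω) := dist_triangle _ _ _
      _ ≤ 2 * r := by rw [dist_comm s (X i ω)]; linarith
  have hpt : ∀ ω, ENNReal.ofReal ((⨆ x : M, infDist x ((fun i => X i ω) '' Set.Iio n)) ^ α)
      ≤ G.indicator (fun _ => ENNReal.ofReal ((2*r)^α)) ω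
        + Gᶜ.indicator (fun _ => ENNReal.ofReal (D^α)) ω := by
    intro ω
    by_cases hω : ω ∈ G
    · rw [Set.indicator_of_mem hω, Set.indicator_of_notMem (by simpa using hω), add_zero]
      exact ENNReal.ofReal_le_ofReal (Real.rpow_le_rpow (hR0 ω) (hRG ω hω) hα.le)
    · rw [Set.indicator_of_notMem hω, Set.indicator_of_mem (by simpa using hω), zero_add]
      exact ENNReal.ofReal_le_ofReal (Real.rpow_le_rpow (hR0 ω) (hRD ω) hα.le)
  have hGc : Pr Gᶜ ≤ ENNReal.ofReal (1 / (c₀ * (r/2)^d))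
      * ENNReal.ofReal (Real.exp (-(n * (c₀ * r^d)))) := by
    have hGcompl : Gᶜ = ⋃ s ∈ S, (⋂ i ∈ Finset.range n, X i ⁻¹' (ball s r)ᶜ) := by
      rw [hG]
      simp only [Set.compl_iInter, Set.compl_iUnion, Set.preimage_compl]
    rw [hGcompl]
    calc Pr (⋃ s ∈ S, (⋂ i ∈ Finset.range n, X i ⁻¹' (ball s r)ᶜ))
        ≤ ∑ s ∈ S, Pr (⋂ i ∈ Finset.range n, X i ⁻¹' (ball s r)ᶜ) :=
          measure_biUnion_finset_le _ _
      _ ≤ ∑ _s ∈ S, ENNReal.ofReal (Real.exp (-(n * (c₀ * r^d)))) :=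
          Finset.sum_le_sum (fun s _ => bad_one_ball Pr ν X hXmeas hXlaw hXindep s r n
            (c₀ * r^d) (by positivity) (hlower s r hr0 hrD))
      _ = (S.card : ℝ≥0∞) * ENNReal.ofReal (Real.exp (-(n * (c₀ * r^d)))) := by
          rw [Finset.sum_const, nsmul_eq_mul]
      _ ≤ ENNReal.ofReal (1 / (c₀ * (r/2)^d))
            * ENNReal.ofReal (Real.exp (-(n * (c₀ * r^d)))) := by
          apply mul_le_mul_left
          rw [← ENNReal.ofReal_natCast]
          apply ENNReal.ofReal_le_ofReal
          rw [le_div_iff₀ (by positivity)]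
          linarith
  calc ∫⁻ ω, ENNReal.ofReal ((⨆ x : M, infDist x ((fun i => X i ω) '' Set.Iio n)) ^ α) ∂Pr
      ≤ ∫⁻ ω, (G.indicator (fun _ => ENNReal.ofReal ((2*r)^α)) ω
        + Gᶜ.indicator (fun _ => ENNReal.ofReal (D^α)) ω) ∂Pr := lintegral_mono hpt
    _ = ENNReal.ofReal ((2*r)^α) * Pr G + ENNReal.ofReal (D^α) * Pr Gᶜ := by
        rw [lintegral_add_left (measurable_const.indicator hGmeas),
          lintegral_indicator_const hGmeas, lintegral_indicator_const hGmeas.compl]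
    _ ≤ ENNReal.ofReal ((2*r)^α) * 1 + ENNReal.ofReal (D^α)
          * (ENNReal.ofReal (1 / (c₀ * (r/2)^d))
            * ENNReal.ofReal (Real.exp (-(n * (c₀ * r^d))))) := by
        gcongr
        · exact prob_le_one
    _ = ENNReal.ofReal ((2*r)^α) + ENNReal.ofReal (D^α)
          * (ENNReal.ofReal (1 / (c₀ * (r/2)^d))
            * ENNReal.ofReal (Real.exp (-(n * (c₀ * r^d))))) := by rw [mul_one]

/-- the `α`-th moment of the covering radius of `n` i.i.d. points whose
law satisfies a lower Ahlfors bound is at most `C · (log n / n)^{α/d}`. -/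
theorem expected_covering_radius_upper_bound
    {Ω : Type*} [MeasurableSpace Ω] (Pr : Measure Ω) [IsProbabilityMeasure Pr]
    {M : Type*} [MetricSpace M] [CompactSpace M] [MeasurableSpace M] [BorelSpace M]
    (d : ℕ) (hd : 0 < d) (α : ℝ) (hα : 0 < α)
    (hdiam : 0 < diam (Set.univ : Set M))
    (ν : Measure M) [IsProbabilityMeasure ν]
    (c₀ : ℝ) (hc₀ : 0 < c₀)
    (hlower : ∀ (x : M) (r : ℝ), 0 < r → r < diam (Set.univ : Set M) →
      c₀ * r ^ d ≤ (ν (ball x r)).toReal)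
    (X : ℕ → Ω → M) (hXmeas : ∀ i, Measurable (X i))
    (hXlaw : ∀ i, Measure.map (X i) Pr = ν)
    (hXindep : iIndepFun X Pr) :
    ∃ C : ℝ, 0 < C ∧ ∀ n : ℕ, 2 ≤ n →
      ∫⁻ ω, ENNReal.ofReal ((⨆ x : M, infDist x ((fun i => X i ω) '' Set.Iio n)) ^ α) ∂Pr
        ≤ ENNReal.ofReal (C * (Real.log n / n) ^ (α / d)) := by
  have hd' : (0:ℝ) < d := Nat.cast_pos.2 hd
  have hM : Nonempty M := by
    by_contra h
    rw [not_nonempty_iff] at h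
    rw [Set.univ_eq_empty_iff.2 h, Metric.diam_empty] at hdiam
    exact lt_irrefl 0 hdiam
  set D := diam (Set.univ : Set M) with hDdef
  set ad := α / (d:ℝ) with had
  have had0 : 0 < ad := div_pos hα hd'
  set K := (ad + 1) / c₀ with hKdef
  have hK : 0 < K := by rw [hKdef]; positivity
  have hlog2 : (0:ℝ) < Real.log 2 := Real.log_pos one_lt_two
  set C := K^ad + 2^α * K^ad + D^α * 2^d / (c₀ * K * Real.log 2 * (Real.log 2)^ad) with hC
  have hCpos : 0 < C := by rw [hC]; positivity
  refine ⟨C, hCpos, ?_⟩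
  intro n hn
  have hn0 : (0:ℝ) < n := by exact_mod_cast Nat.lt_of_lt_of_le Nat.zero_lt_two hn
  have hL2 : Real.log 2 ≤ Real.log n := Real.log_le_log (by norm_num) (by exact_mod_cast hn)
  have hL : 0 < Real.log n := lt_of_lt_of_le hlog2 hL2
  set L := Real.log n with hLdef
  set g := (L / (n:ℝ))^ad with hgdef
  have hg0 : 0 < g := by rw [hgdef]; positivity
  set t := K * L / n with ht
  have ht0 : 0 < t := by rw [ht]; positivity
  have hA : t^ad = K^ad * g := by
    rw [ht, hgdef, mul_div_assoc, Real.mul_rpow hK.le (by positivity)]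
  rcases le_or_gt (D^d) t with hcase | hcase
  · -- trivial regime
    have hPmem : ∀ ω, X 0 ω ∈ (fun i => X i ω) '' Set.Iio n :=
      fun ω => ⟨0, by simpa using Nat.lt_of_lt_of_le Nat.zero_lt_two hn, rfl⟩
    have hbound : ∀ ω, ENNReal.ofReal ((⨆ x : M, infDist x ((fun i => X i ω) '' Set.Iio n)) ^ α)
        ≤ ENNReal.ofReal (D^α) := by
      intro ω
      apply ENNReal.ofReal_le_ofReal
      apply Real.rpow_le_rpow (Real.iSup_nonneg fun x => infDist_nonneg) ?_ hα.le
      apply ciSup_le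
      intro x
      exact le_trans (infDist_le_dist_of_mem (hPmem ω))
        (dist_le_diam_of_mem isCompact_univ.isBounded (Set.mem_univ _) (Set.mem_univ _))
    have hDα : D^α ≤ C * g := by
      have e1 : D^α = ((D^d : ℝ))^ad := by
        rw [← Real.rpow_natCast D d, ← Real.rpow_mul hdiam.le]
        congr 1
        rw [had]
        field_simp
      have e2 : ((D^d : ℝ))^ad ≤ K^ad * g := by
        rw [← hA]
        exact Real.rpow_le_rpow (by positivity) hcase had0.le
      have e3 : K^ad * g ≤ C * g := by
        apply mul_le_mul_of_nonneg_right ?_ hg0.le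
        rw [hC]
        have h1 : 0 ≤ 2^α * K^ad := by positivity
        have h2 : 0 ≤ D^α * 2^d / (c₀ * K * Real.log 2 * (Real.log 2)^ad) := by positivity
        linarith
      linarith [e1 ▸ e2]
    calc ∫⁻ ω, ENNReal.ofReal ((⨆ x : M, infDist x ((fun i => X i ω) '' Set.Iio n)) ^ α) ∂Pr
        ≤ ∫⁻ _ω, ENNReal.ofReal (D^α) ∂Pr := lintegral_mono hbound
      _ = ENNReal.ofReal (D^α) := by simp
      _ ≤ ENNReal.ofReal (C * g) := ENNReal.ofReal_le_ofReal hDα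
  · -- main regime
    set r := t^(1/(d:ℝ)) with hrdef
    have hr0 : 0 < r := Real.rpow_pos_of_pos ht0 _
    have hrd : r^d = t := by
      rw [hrdef, ← Real.rpow_natCast (t ^ (1/(d:ℝ))) d, ← Real.rpow_mul ht0.le,
        one_div, inv_mul_cancel₀ hd'.ne', Real.rpow_one]
    have hrD : r < D := lt_of_pow_lt_pow_left₀ d hdiam.le (by rw [hrd]; exact hcase)
    have hkey := covering_key Pr d α hα ν c₀ hc₀ hlower X hXmeas hXlaw hXindep n
      (le_trans one_le_two hn) r hr0 hrD
    refine le_trans hkey ?_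
    have hcomb : ENNReal.ofReal ((2*r)^α) + ENNReal.ofReal (D^α)
          * (ENNReal.ofReal (1 / (c₀ * (r/2)^d))
            * ENNReal.ofReal (Real.exp (-(n * (c₀ * r^d)))))
        = ENNReal.ofReal ((2*r)^α
            + D^α * (1 / (c₀ * (r/2)^d)) * Real.exp (-(n * (c₀ * r^d)))) := by
      rw [← ENNReal.ofReal_mul (by positivity), ← ENNReal.ofReal_mul (by positivity),
        ← ENNReal.ofReal_add (by positivity) (by positivity), mul_assoc]
    rw [hcomb]
    apply ENNReal.ofReal_le_ofReal
    -- the real inequality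
    have e2 : (2*r)^α = 2^α * (K^ad * g) := by
      rw [Real.mul_rpow (by norm_num) hr0.le]
      congr 1
      rw [hrdef, ← Real.rpow_mul ht0.le, show (1/(d:ℝ)) * α = ad by rw [had]; ring, hA]
    have e3 : (1:ℝ) / (c₀ * (r/2)^d) = 2^d * n / (c₀ * K * L) := by
      rw [div_pow, hrd, ht]
      rw [eq_div_iff (by positivity)]
      field_simp
    have e4 : Real.exp (-((n:ℝ) * (c₀ * r^d))) = g / (L^ad * n) := by
      rw [hrd, ht]
      have hexp_arg : (n:ℝ) * (c₀ * (K * L / n)) = (ad+1) * L := by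
        rw [hKdef]
        field_simp
      rw [hexp_arg, Real.exp_neg]
      have hexp2 : Real.exp ((ad+1) * L) = (n:ℝ)^(ad+1) := by
        rw [Real.rpow_def_of_pos hn0, hLdef]
        ring_nf
      rw [hexp2, Real.rpow_add_one (ne_of_gt hn0)]
      have hng : (n:ℝ)^ad * g = L^ad := by
        rw [hgdef, ← Real.mul_rpow (by positivity) (by positivity)]
        congr 1
        field_simp
      rw [← hng]
      rw [eq_div_iff (by positivity)]
      field_simp
    calc (2*r)^α + D^α * (1 / (c₀ * (r/2)^d)) * Real.exp (-(n * (c₀ * r^d)))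
        = 2^α * (K^ad * g) + D^α * (2^d * n / (c₀ * K * L)) * (g / (L^ad * n)) := by
          rw [e2, e3, e4]
      _ = 2^α * K^ad * g + (D^α * 2^d / (c₀ * K * (L * L^ad))) * g := by
          field_simp
      _ ≤ 2^α * K^ad * g + (D^α * 2^d / (c₀ * K * (Real.log 2 * (Real.log 2)^ad))) * g := by
          gcongr <;> first | positivity | exact hL2
      _ ≤ C * g := by
          rw [hC]
          have e5 : D^α * 2^d / (c₀ * K * (Real.log 2 * (Real.log 2)^ad))
              = D^α * 2^d / (c₀ * K * Real.log 2 * (Real.log 2)^ad) := by ring_nf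
          rw [e5]
          have h1 : 0 ≤ K^ad := by positivity
          nlinarith [hg0.le]
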